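/- For n ≥ 3, the Green operator is covariant under the inversion γ_i(x) = x/|x|²: G(γ_p* f) = γ_r*(G f) for all f ∈ L^p(ℝⁿ, dx), with p = 2n/(n+2) and r = 2n/(n−2). -/

import Mathlib

open MeasureTheory Filter Topology
open scoped ENNReal

noncomputable section

/-- The Green operator on `ℝⁿ`, `G(f)(x) = c_n ∫ |x−y|^{2−n} f(y) dy`, with
`c_n = [(n−2)|S^{n−1}|]⁻¹`. -/
def greenOp (n : ℕ) (f : EuclideanSpace ℝ (Fin n) → ℝ)
    (x : EuclideanSpace ℝ (Fin n)) : ℝ :=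
  (((n : ℝ) - 2) *
      (μH[(n : ℝ) - 1] (Metric.sphere (0 : EuclideanSpace ℝ (Fin n)) 1)).toReal)⁻¹ *
    ∫ y, ‖x - y‖ ^ ((2 : ℝ) - n) * f y

/-- The action `γ*_q` for the inversion `γ_i(x) = x/|x|²` (which is its own inverse):
`γ*_q(f)(y) = |J_{γ_i}(y)|^{1/q} f(γ_i y) = |y|^{-2n/q} f(y/|y|²)`. -/
def invStar {n : ℕ} (q : ℝ) (f : EuclideanSpace ℝ (Fin n) → ℝ)
    (y : EuclideanSpace ℝ (Fin n)) : ℝ :=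
  ‖y‖ ^ (-(2 * (n : ℝ)) / q) * f ((‖y‖ ^ 2)⁻¹ • y)


open EuclideanGeometry in
private lemma green_inv_apply {E : Type*} [NormedAddCommGroup E] [InnerProductSpace ℝ E]
    (z : E) : inversion (0 : E) 1 z = (‖z‖ ^ 2)⁻¹ • z := by
  simp [inversion, dist_eq_norm, one_div]

open EuclideanGeometry in
private lemma green_abs_det_deriv {E : Type*} [NormedAddCommGroup E] [InnerProductSpace ℝ E]
    [FiniteDimensional ℝ E] {n : ℕ} (hfin : Module.finrank ℝ E = n) (z : E) (hz : z ≠ 0) :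
    |(((1 / dist z (0 : E)) ^ 2 • ((ℝ ∙ (z - 0))ᗮ.reflection : E →L[ℝ] E))).det| =
      ‖z‖ ^ (-(2 * (n : ℝ))) := by
  set L : E →L[ℝ] E := ((ℝ ∙ (z - 0))ᗮ.reflection : E →L[ℝ] E)
  have hL : |LinearMap.det (L : E →ₗ[ℝ] E)| = 1 := by
    have h1 : ((L : E →ₗ[ℝ] E) ∘ₗ (L : E →ₗ[ℝ] E)) = LinearMap.id := by
      ext v
      simp [L]
    have h2 := congrArg LinearMap.det h1
    rw [LinearMap.det_comp, LinearMap.det_id] at h2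
    rcases mul_self_eq_one_iff.mp h2 with h | h <;> simp [h]
  have hnorm : (0:ℝ) < ‖z‖ := norm_pos_iff.mpr hz
  rw [ContinuousLinearMap.det, ContinuousLinearMap.coe_smul, LinearMap.det_smul,
    hfin, abs_mul, abs_pow, hL, mul_one]
  rw [Real.rpow_neg (norm_nonneg z)]
  rw [show (2 * (n:ℝ)) = ((2*n : ℕ) : ℝ) by push_cast; ring, Real.rpow_natCast]
  simp only [dist_eq_norm, sub_zero, one_div]
  rw [abs_pow, abs_inv, abs_norm]
  ring_nf

open EuclideanGeometry in
private lemma green_cov_key {E : Type*} [NormedAddCommGroup E] [InnerProductSpace ℝ E]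
    [FiniteDimensional ℝ E] [MeasurableSpace E] [BorelSpace E]
    {n : ℕ} (hfin : Module.finrank ℝ E = n)
    (μ : MeasureTheory.Measure E) [μ.IsAddHaarMeasure] (h0 : μ {0} = 0)
    (f : E → ℝ) (x : E) (hx : x ≠ 0) :
    ∫ y, ‖(‖x‖ ^ 2)⁻¹ • x - y‖ ^ ((2 : ℝ) - n) * f y ∂μ =
      ‖x‖ ^ ((n : ℝ) - 2) *
        ∫ y, ‖x - y‖ ^ ((2 : ℝ) - n) * (‖y‖ ^ (-((n : ℝ) + 2)) * f ((‖y‖ ^ 2)⁻¹ • y)) ∂μ := by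
  classical
  set φ : E → E := fun z => (‖z‖ ^ 2)⁻¹ • z with hφ
  have hφe : inversion (0 : E) 1 = φ := funext fun w => green_inv_apply w
  have hφinv : ∀ z : E, φ (φ z) = z := by
    intro z
    have := inversion_inversion (0 : E) (one_ne_zero) z
    rwa [hφe] at this
  have hφ0 : ∀ z : E, z ≠ 0 → φ z ≠ 0 := by
    intro z hz h
    apply hz
    rw [← hφinv z, h]
    simp [hφ]
  set s : Set E := {0}ᶜ with hs
  have hsm : MeasurableSet s := (measurableSet_singleton 0).compl
  set f' : E → (E →L[ℝ] E) := fun z =>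
    (1 / dist z (0 : E)) ^ 2 • ((ℝ ∙ (z - 0))ᗮ.reflection : E →L[ℝ] E) with hf'
  have hderiv : ∀ z ∈ s, HasFDerivWithinAt φ (f' z) s z := by
    intro z hz
    have h1 : HasFDerivAt (inversion (0 : E) 1) (f' z) z := by
      simpa [hf'] using
        hasFDerivAt_inversion (c := (0:E)) (R := 1) (Set.mem_compl_singleton_iff.mp hz)
    rw [hφe] at h1
    exact h1.hasFDerivWithinAt
  have hinj : Set.InjOn φ s := by
    intro a _ b _ h
    have := congrArg φ h
    rwa [hφinv, hφinv] at this
  have himg : φ '' s = s := by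
    ext z
    constructor
    · rintro ⟨w, hw, rfl⟩
      exact hφ0 w hw
    · intro hz
      exact ⟨φ z, hφ0 z hz, hφinv z⟩
  have hres : μ.restrict s = μ := by
    rw [Measure.restrict_congr_set (t := Set.univ), Measure.restrict_univ]
    rw [ae_eq_univ, hs, compl_compl]
    exact h0
  set g : E → ℝ := fun z => ‖φ x - z‖ ^ ((2 : ℝ) - n) * f z with hg
  have cov : ∫ z in s, g z ∂μ = ∫ z in s, |(f' z).det| • g (φ z) ∂μ := by
    conv_lhs => rw [← himg]
    exact integral_image_eq_integral_abs_det_fderiv_smul μ hsm hderiv hinj g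
  have hnx : (0:ℝ) < ‖x‖ := norm_pos_iff.mpr hx
  have hpt : ∀ z ∈ s, |(f' z).det| • g (φ z) =
      ‖x‖ ^ ((n : ℝ) - 2) *
        (‖x - z‖ ^ ((2 : ℝ) - n) * (‖z‖ ^ (-((n : ℝ) + 2)) * f ((‖z‖ ^ 2)⁻¹ • z))) := by
    intro z hz
    have hz0 : z ≠ 0 := Set.mem_compl_singleton_iff.mp hz
    have hnz : (0:ℝ) < ‖z‖ := norm_pos_iff.mpr hz0
    have hdet : |(f' z).det| = ‖z‖ ^ (-(2 * (n:ℝ))) := green_abs_det_deriv hfin z hz0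
    have hdi := dist_inversion_inversion (c := (0:E)) (x := x) (y := z) hx hz0 1
    simp only [hφe, dist_eq_norm, sub_zero, one_pow] at hdi
    have hdist : ‖φ x - φ z‖ = ‖x - z‖ / (‖x‖ * ‖z‖) := by rw [hdi]; ring
    have hrw : ‖φ x - φ z‖ ^ ((2:ℝ) - n) =
        ‖x - z‖ ^ ((2:ℝ) - n) * (‖x‖ ^ ((n:ℝ) - 2) * ‖z‖ ^ ((n:ℝ) - 2)) := by
      rw [hdist, Real.div_rpow (norm_nonneg _) (by positivity),
        Real.mul_rpow (norm_nonneg x) (norm_nonneg z), div_eq_mul_inv, mul_inv,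
        ← Real.rpow_neg (norm_nonneg x), ← Real.rpow_neg (norm_nonneg z)]
      ring_nf
    have hcomb : ‖z‖ ^ (-(2 * (n:ℝ))) * ‖z‖ ^ ((n:ℝ) - 2) = ‖z‖ ^ (-((n:ℝ) + 2)) := by
      rw [← Real.rpow_add hnz]; ring_nf
    have hfz : f (φ z) = f ((‖z‖ ^ 2)⁻¹ • z) := rfl
    rw [smul_eq_mul, hg, hdet]
    simp only [hrw, hfz]
    rw [show ‖z‖ ^ (-(2 * (n:ℝ))) * (‖x - z‖ ^ ((2:ℝ) - n) *
          (‖x‖ ^ ((n:ℝ) - 2) * ‖z‖ ^ ((n:ℝ) - 2)) * f ((‖z‖ ^ 2)⁻¹ • z)) =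
        ‖x‖ ^ ((n:ℝ) - 2) * (‖x - z‖ ^ ((2:ℝ) - n) *
          ((‖z‖ ^ (-(2 * (n:ℝ))) * ‖z‖ ^ ((n:ℝ) - 2)) * f ((‖z‖ ^ 2)⁻¹ • z))) by ring, hcomb]
  calc ∫ y, ‖(‖x‖ ^ 2)⁻¹ • x - y‖ ^ ((2 : ℝ) - n) * f y ∂μ
      = ∫ z in s, g z ∂μ := by rw [hres]
    _ = ∫ z in s, |(f' z).det| • g (φ z) ∂μ := cov
    _ = ∫ z in s, ‖x‖ ^ ((n : ℝ) - 2) *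
        (‖x - z‖ ^ ((2 : ℝ) - n) * (‖z‖ ^ (-((n : ℝ) + 2)) * f ((‖z‖ ^ 2)⁻¹ • z))) ∂μ :=
        setIntegral_congr_fun hsm hpt
    _ = ‖x‖ ^ ((n : ℝ) - 2) *
        ∫ y, ‖x - y‖ ^ ((2 : ℝ) - n) * (‖y‖ ^ (-((n : ℝ) + 2)) * f ((‖y‖ ^ 2)⁻¹ • y)) ∂μ := by
        rw [hres, integral_const_mul]

/-- for `n ≥ 3` the Green operator is covariant under the inversion
`γ_i(x) = x/|x|²`: `G(γ_p* f) = γ_r*(G f)` for all `f ∈ L^p(ℝⁿ,dx)`, with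
`p = 2n/(n+2)` and `r = 2n/(n−2)`. -/
theorem green_covariance_inversion {n : ℕ} (hn : 3 ≤ n)
    (f : EuclideanSpace ℝ (Fin n) → ℝ)
    (hf : MemLp f (ENNReal.ofReal (2 * n / (n + 2) : ℝ)) volume) :
    ∀ᵐ x : EuclideanSpace ℝ (Fin n),
      greenOp n (invStar (2 * n / (n + 2) : ℝ) f) x =
        invStar (2 * n / (n - 2) : ℝ) (greenOp n f) x := by
  have hn3 : (3:ℝ) ≤ (n:ℝ) := by exact_mod_cast hn
  have h2n : (2:ℝ) * n ≠ 0 := by positivity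
  have hp : -(2 * (n:ℝ)) / (2 * n / (n + 2)) = -((n:ℝ) + 2) := by
    rw [div_div_eq_mul_div, div_eq_iff h2n]
    ring
  have hr : -(2 * (n:ℝ)) / (2 * n / ((n:ℝ) - 2)) = (2:ℝ) - n := by
    rw [div_div_eq_mul_div, div_eq_iff h2n]
    ring
  haveI : NeZero n := ⟨by omega⟩
  have h0 : (volume : Measure (EuclideanSpace ℝ (Fin n))) {0} = 0 := measure_singleton 0
  have hae : ∀ᵐ x : EuclideanSpace ℝ (Fin n), x ≠ 0 := by
    rw [ae_iff]
    convert h0 using 2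
    ext x
    simp
  filter_upwards [hae] with x hx
  have hnx : (0:ℝ) < ‖x‖ := norm_pos_iff.mpr hx
  simp only [greenOp, invStar, hp, hr]
  rw [green_cov_key finrank_euclideanSpace_fin volume h0 f x hx]
  have hxc : ‖x‖ ^ ((2:ℝ) - n) * ‖x‖ ^ ((n:ℝ) - 2) = 1 := by
    rw [← Real.rpow_add hnx, show (2-(n:ℝ)) + ((n:ℝ)-2) = 0 by ring, Real.rpow_zero]
  set C : ℝ := (((n : ℝ) - 2) *
      (μH[(n : ℝ) - 1] (Metric.sphere (0 : EuclideanSpace ℝ (Fin n)) 1)).toReal)⁻¹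
  set I : ℝ := ∫ y, ‖x - y‖ ^ ((2:ℝ) - n) * (‖y‖ ^ (-((n:ℝ) + 2)) * f ((‖y‖ ^ 2)⁻¹ • y))
  calc C * I = (‖x‖ ^ ((2:ℝ) - n) * ‖x‖ ^ ((n:ℝ) - 2)) * (C * I) := by rw [hxc, one_mul]
    _ = ‖x‖ ^ ((2:ℝ) - ↑n) * (C * (‖x‖ ^ ((n:ℝ) - 2) * I)) := by ring


end
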